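/- Let Θ be a p × p real matrix with operator norm ‖Θ‖_op = γ < 1, and let Σ_Z be symmetric positive definite. If Σ is the unique symmetric positive definite solution of the Lyapunov equation Σ = Θ Σ Θᵀ + Σ_Z, then the condition number satisfies κ(Σ) ≤ κ(Σ_Z) · (1 + γ²)/(1 − γ²). -/

import Mathlib

open scoped BigOperators

noncomputable def frob {m n : Type*} [Fintype m] [Fintype n] (A : Matrix m n ℝ) : ℝ :=
  Real.sqrt (∑ i, ∑ j, (A i j)^2)

noncomputable def opNorm {m n : Type*} [Fintype m] [Fintype n] [DecidableEq m] [DecidableEq n]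
    (A : Matrix m n ℝ) : ℝ :=
  ‖LinearMap.toContinuousLinearMap (Matrix.toEuclideanLin A)‖

noncomputable def nuclearNorm {m n : Type*} [Fintype m] [Fintype n] [DecidableEq n]
    (A : Matrix m n ℝ) : ℝ :=
  ∑ i, Real.sqrt ((show (A.transpose * A).IsHermitian from by
    simpa [Matrix.conjTranspose_eq_transpose_of_trivial] using Matrix.isHermitian_conjTranspose_mul_self A).eigenvalues i)

noncomputable def colSpace {m n : Type*} [Fintype m] [Fintype n] [DecidableEq n]
    (A : Matrix m n ℝ) : Submodule ℝ (EuclideanSpace ℝ m) :=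
  LinearMap.range (Matrix.toEuclideanLin A)

noncomputable def projMat {m : Type*} [Fintype m] [DecidableEq m]
    (S : Submodule ℝ (EuclideanSpace ℝ m)) : Matrix m m ℝ :=
  Matrix.toEuclideanLin.symm (S.subtype ∘ₗ (S.orthogonalProjectionOnto).toLinearMap)

noncomputable def PrPerp {m n : Type*} [Fintype m] [Fintype n] [DecidableEq m] [DecidableEq n]
    (A B : Matrix m n ℝ) : Matrix m n ℝ :=
  projMat (colSpace A).orthogonal * B * projMat (colSpace A.transpose).orthogonal

noncomputable def Pr {m n : Type*} [Fintype m] [Fintype n] [DecidableEq m] [DecidableEq n]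
    (A B : Matrix m n ℝ) : Matrix m n ℝ :=
  B - PrPerp A B

noncomputable def maxEig {k : Type*} [Fintype k] [DecidableEq k] (M : Matrix k k ℝ) : ℝ :=
  sSup (spectrum ℝ M)
noncomputable def minEig {k : Type*} [Fintype k] [DecidableEq k] (M : Matrix k k ℝ) : ℝ :=
  sInf (spectrum ℝ M)
noncomputable def condNum {k : Type*} [Fintype k] [DecidableEq k] (M : Matrix k k ℝ) : ℝ :=
  maxEig M / minEig M

open Matrix in
lemma myStar_eq_transpose {p : ℕ} (U : Matrix (Fin p) (Fin p) ℝ) : star U = U.transpose := by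
  ext i j; simp [Matrix.star_apply]

open Matrix in
lemma quad_repr {p : ℕ} (M : Matrix (Fin p) (Fin p) ℝ) (hM : M.IsHermitian) (x : Fin p → ℝ) :
    x ⬝ᵥ (M *ᵥ x) = ∑ i, hM.eigenvalues i *
      (((hM.eigenvectorUnitary : Matrix (Fin p) (Fin p) ℝ).transpose *ᵥ x) i)^2 ∧
    x ⬝ᵥ x = ∑ i, (((hM.eigenvectorUnitary : Matrix (Fin p) (Fin p) ℝ).transpose *ᵥ x) i)^2 := by
  set U : Matrix (Fin p) (Fin p) ℝ := (hM.eigenvectorUnitary : Matrix (Fin p) (Fin p) ℝ) with hUdef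
  have hU1 : U * U.transpose = 1 := by
    have := Matrix.mem_unitaryGroup_iff.mp hM.eigenvectorUnitary.2
    rwa [myStar_eq_transpose] at this
  set y : Fin p → ℝ := U.transpose *ᵥ x with hy
  have hyv : y = x ᵥ* U := by rw [hy, Matrix.mulVec_transpose]
  constructor
  · conv_lhs => rw [hM.spectral_theorem]
    have hdiag : (Matrix.diagonal (RCLike.ofReal ∘ hM.eigenvalues) : Matrix (Fin p) (Fin p) ℝ)
        = Matrix.diagonal hM.eigenvalues := by
      ext i j; by_cases h : i = j <;> simp [Matrix.diagonal, h]
    rw [Unitary.conjStarAlgAut_apply, myStar_eq_transpose, hdiag, ← Matrix.mulVec_mulVec, ← Matrix.mulVec_mulVec,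
      Matrix.dotProduct_mulVec, ← hyv, ← hy]
    simp only [Matrix.mulVec_diagonal, dotProduct]
    congr 1; ext i; ring
  · calc x ⬝ᵥ x = x ⬝ᵥ ((U * U.transpose) *ᵥ x) := by rw [hU1, Matrix.one_mulVec]
    _ = (x ᵥ* U) ⬝ᵥ (U.transpose *ᵥ x) := by
        rw [← Matrix.mulVec_mulVec, Matrix.dotProduct_mulVec]
    _ = y ⬝ᵥ y := by rw [← hyv, ← hy]
    _ = ∑ i, (y i)^2 := by simp [dotProduct, sq]

lemma maxEig' {p : ℕ} {M : Matrix (Fin p) (Fin p) ℝ} (hM : M.IsHermitian) (i : Fin p) :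
    hM.eigenvalues i ≤ sSup (spectrum ℝ M) :=
  le_csSup (Matrix.finite_real_spectrum.bddAbove) (hM.eigenvalues_mem_spectrum_real i)

lemma minEig' {p : ℕ} {M : Matrix (Fin p) (Fin p) ℝ} (hM : M.IsHermitian) (i : Fin p) :
    sInf (spectrum ℝ M) ≤ hM.eigenvalues i :=
  csInf_le (Matrix.finite_real_spectrum.bddBelow) (hM.eigenvalues_mem_spectrum_real i)

open Matrix in
lemma quad_le_max {p : ℕ} {M : Matrix (Fin p) (Fin p) ℝ} (hM : M.IsHermitian) (x : Fin p → ℝ) :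
    x ⬝ᵥ (M *ᵥ x) ≤ sSup (spectrum ℝ M) * (x ⬝ᵥ x) := by
  obtain ⟨h1, h2⟩ := quad_repr M hM x
  rw [h1, h2, Finset.mul_sum]
  exact Finset.sum_le_sum fun i _ =>
    mul_le_mul_of_nonneg_right (maxEig' hM i) (sq_nonneg _)

open Matrix in
lemma min_le_quad {p : ℕ} {M : Matrix (Fin p) (Fin p) ℝ} (hM : M.IsHermitian) (x : Fin p → ℝ) :
    sInf (spectrum ℝ M) * (x ⬝ᵥ x) ≤ x ⬝ᵥ (M *ᵥ x) := by
  obtain ⟨h1, h2⟩ := quad_repr M hM x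
  rw [h1, h2, Finset.mul_sum]
  exact Finset.sum_le_sum fun i _ =>
    mul_le_mul_of_nonneg_right (minEig' hM i) (sq_nonneg _)

open Matrix in
lemma exists_unit_vec {p : ℕ} {M : Matrix (Fin p) (Fin p) ℝ} (hM : M.IsHermitian)
    {c : ℝ} (hc : c ∈ spectrum ℝ M) :
    ∃ v : Fin p → ℝ, v ⬝ᵥ v = 1 ∧ v ⬝ᵥ (M *ᵥ v) = c := by
  rw [hM.spectrum_real_eq_range_eigenvalues] at hc
  obtain ⟨i, hi⟩ := hc
  refine ⟨⇑(hM.eigenvectorBasis i), ?_, ?_⟩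
  · have h1 : (inner ℝ (hM.eigenvectorBasis i) (hM.eigenvectorBasis i) : ℝ) = 1 := by
      rw [real_inner_self_eq_norm_sq, hM.eigenvectorBasis.orthonormal.1 i]; norm_num
    rw [← h1, PiLp.inner_apply]
    simp [dotProduct, sq]
  · have h2 := hM.mulVec_eigenvectorBasis i
    rw [h2]
    have h1 : (inner ℝ (hM.eigenvectorBasis i) (hM.eigenvectorBasis i) : ℝ) = 1 := by
      rw [real_inner_self_eq_norm_sq, hM.eigenvectorBasis.orthonormal.1 i]; norm_num
    rw [PiLp.inner_apply] at h1
    simp only [dotProduct_smul, smul_eq_mul]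
    rw [show (⇑(hM.eigenvectorBasis i) ⬝ᵥ ⇑(hM.eigenvectorBasis i)) = 1 from ?_, mul_one, hi]
    rw [← h1]; simp [dotProduct, sq]

open Matrix in
open scoped Matrix.Norms.L2Operator in
lemma transpose_mulVec_sq_le {p : ℕ} (Θ : Matrix (Fin p) (Fin p) ℝ) (v : Fin p → ℝ)
    (hv : v ⬝ᵥ v = 1) :
    (Θ.transpose *ᵥ v) ⬝ᵥ (Θ.transpose *ᵥ v) ≤ (opNorm Θ)^2 := by
  set v' : EuclideanSpace ℝ (Fin p) := (WithLp.equiv 2 (Fin p → ℝ)).symm v with hv'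
  have hinner : (inner ℝ v' v' : ℝ) = v ⬝ᵥ v := by
    rw [PiLp.inner_apply]; simp [hv', dotProduct, sq]
  have hnv2 : ‖v'‖ ^ 2 = 1 := by rw [← real_inner_self_eq_norm_sq, hinner, hv]
  have hnv : ‖v'‖ = 1 := by nlinarith [norm_nonneg v']
  have hΘT : ‖Θ.transpose‖ = opNorm Θ := by
    have hct : Θ.conjTranspose = Θ.transpose := by ext i j; simp
    rw [← hct, Matrix.l2_opNorm_conjTranspose]
    rfl
  have hb := Matrix.l2_opNorm_mulVec Θ.transpose v'
  rw [hΘT, hnv, mul_one] at hb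
  set w : Fin p → ℝ := Θ.transpose *ᵥ v with hw
  have hweq : (Θ.transpose *ᵥ (v' : Fin p → ℝ)) = w := rfl
  have hwin : w ⬝ᵥ w = ‖(EuclideanSpace.equiv (Fin p) ℝ).symm (Θ.transpose *ᵥ v')‖ ^ 2 := by
    rw [← real_inner_self_eq_norm_sq, PiLp.inner_apply]
    simp [dotProduct, hweq, sq]
  have hnn : (0:ℝ) ≤ ‖(EuclideanSpace.equiv (Fin p) ℝ).symm (Θ.transpose *ᵥ v')‖ := norm_nonneg _
  rw [hwin]
  have := pow_le_pow_left₀ hnn hb 2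
  exact this

open Matrix in
lemma posSemidef_term {p : ℕ} {Sig Θ : Matrix (Fin p) (Fin p) ℝ} (hSpd : Sig.PosDef)
    (u : Fin p → ℝ) : 0 ≤ u ⬝ᵥ ((Θ * Sig * Θ.transpose) *ᵥ u) := by
  have hct : Θ.conjTranspose = Θ.transpose := by ext i j; simp
  have h := (hSpd.posSemidef.mul_mul_conjTranspose_same Θ).dotProduct_mulVec_nonneg u
  rw [hct] at h
  simpa using h

open Matrix

/-- Condition-number bound for the solution of the Lyapunov equation:
κ(Σ) ≤ κ(Σ_Z)·(1 + γ²)/(1 − γ²). -/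
theorem condNum_lyapunov_le {p : ℕ} (Θ SigZ Sig : Matrix (Fin p) (Fin p) ℝ) (γ : ℝ)
    (hγ : opNorm Θ = γ) (hγ1 : γ < 1)
    (hZ : SigZ.IsSymm) (hZpd : SigZ.PosDef)
    (hS : Sig.IsSymm) (hSpd : Sig.PosDef)
    (hLyap : Sig = Θ * Sig * Θ.transpose + SigZ) :
    condNum Sig ≤ condNum SigZ * (1 + γ ^ 2) / (1 - γ ^ 2) := by
  have hγ0 : 0 ≤ γ := hγ ▸ norm_nonneg _
  have h1γ : 0 < 1 - γ ^ 2 := by nlinarith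
  rcases Nat.eq_zero_or_pos p with hp | hp
  · subst hp
    have hsp : ∀ M : Matrix (Fin 0) (Fin 0) ℝ, spectrum ℝ M = ∅ := fun M =>
      Set.eq_empty_of_forall_notMem fun x hx => (spectrum.mem_iff.mp hx)
        (isUnit_of_subsingleton _)
    simp [condNum, maxEig, minEig, hsp, Real.sSup_empty, Real.sInf_empty]
  haveI : Nonempty (Fin p) := ⟨⟨0, hp⟩⟩
  have hSH : Sig.IsHermitian := hSpd.1
  have hZH : SigZ.IsHermitian := hZpd.1
  set a := sSup (spectrum ℝ Sig) with ha
  set b := sInf (spectrum ℝ Sig) with hb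
  set az := sSup (spectrum ℝ SigZ) with haz
  set bz := sInf (spectrum ℝ SigZ) with hbz
  have hfin : (spectrum ℝ Sig).Finite := Matrix.finite_real_spectrum
  have hfinZ : (spectrum ℝ SigZ).Finite := Matrix.finite_real_spectrum
  have hne : (spectrum ℝ Sig).Nonempty := by
    rw [hSH.spectrum_real_eq_range_eigenvalues]; exact Set.range_nonempty _
  have hneZ : (spectrum ℝ SigZ).Nonempty := by
    rw [hZH.spectrum_real_eq_range_eigenvalues]; exact Set.range_nonempty _
  -- positivity of min eigenvalues
  have hbpos : 0 < b := by
    have hmem2 : b ∈ Set.range hSH.eigenvalues := by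
      rw [← hSH.spectrum_real_eq_range_eigenvalues]; exact hne.csInf_mem hfin
    obtain ⟨i, hi⟩ := hmem2
    exact hi ▸ hSpd.eigenvalues_pos i
  have hbzpos : 0 < bz := by
    have hmem2 : bz ∈ Set.range hZH.eigenvalues := by
      rw [← hZH.spectrum_real_eq_range_eigenvalues]; exact hneZ.csInf_mem hfinZ
    obtain ⟨i, hi⟩ := hmem2
    exact hi ▸ hZpd.eigenvalues_pos i
  have hba : b ≤ a := csInf_le_csSup hne hfin.bddBelow hfin.bddAbove
  have hbzaz : bz ≤ az := csInf_le_csSup hneZ hfinZ.bddBelow hfinZ.bddAbove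
  have hapos : 0 < a := lt_of_lt_of_le hbpos hba
  have hazpos : 0 < az := lt_of_lt_of_le hbzpos hbzaz
  -- eigenvectors
  obtain ⟨v, hv1, hv2⟩ := exists_unit_vec hSH (hne.csSup_mem hfin)
  obtain ⟨u, hu1, hu2⟩ := exists_unit_vec hSH (hne.csInf_mem hfin)
  -- lower bound : bz ≤ b
  have hblow : bz ≤ b := by
    have hsplit : u ⬝ᵥ (Sig *ᵥ u) =
        u ⬝ᵥ ((Θ * Sig * Θ.transpose) *ᵥ u) + u ⬝ᵥ (SigZ *ᵥ u) := by
      conv_lhs => rw [hLyap]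
      rw [Matrix.add_mulVec, dotProduct_add]
    have h1 : 0 ≤ u ⬝ᵥ ((Θ * Sig * Θ.transpose) *ᵥ u) := posSemidef_term hSpd u
    have h2 : bz * 1 ≤ u ⬝ᵥ (SigZ *ᵥ u) := by
      have := min_le_quad hZH u
      rwa [hu1] at this
    rw [hb, ← hu2, hsplit]
    linarith
  -- upper bound : a * (1 - γ²) ≤ az
  have hup : a * (1 - γ ^ 2) ≤ az := by
    set w : Fin p → ℝ := Θ.transpose *ᵥ v with hw
    have hsplit : v ⬝ᵥ (Sig *ᵥ v) =
        w ⬝ᵥ (Sig *ᵥ w) + v ⬝ᵥ (SigZ *ᵥ v) := by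
      conv_lhs => rw [hLyap]
      rw [Matrix.add_mulVec, dotProduct_add]
      congr 1
      rw [← Matrix.mulVec_mulVec, ← Matrix.mulVec_mulVec, Matrix.dotProduct_mulVec,
        ← Matrix.mulVec_transpose, ← hw]
    have h2 : v ⬝ᵥ (SigZ *ᵥ v) ≤ az * 1 := by
      have := quad_le_max hZH v
      rwa [hv1] at this
    have h3 : w ⬝ᵥ (Sig *ᵥ w) ≤ a * (w ⬝ᵥ w) := quad_le_max hSH w
    have h4 : w ⬝ᵥ w ≤ γ ^ 2 := by
      have := transpose_mulVec_sq_le Θ v hv1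
      rwa [hγ] at this
    have h5 : a * (w ⬝ᵥ w) ≤ a * γ ^ 2 :=
      mul_le_mul_of_nonneg_left h4 (le_of_lt hapos)
    have hav : a = v ⬝ᵥ (Sig *ᵥ v) := hv2.symm
    nlinarith
  -- conclude
  show a / b ≤ az / bz * (1 + γ ^ 2) / (1 - γ ^ 2)
  rw [div_le_iff₀ hbpos]
  have heq : az / bz * (1 + γ ^ 2) / (1 - γ ^ 2) * b
      = az * (1 + γ ^ 2) * b / (bz * (1 - γ ^ 2)) := by
    field_simp
    try ring
  rw [heq, le_div_iff₀ (by positivity)]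
  nlinarith [mul_le_mul_of_nonneg_right hup (le_of_lt hbzpos),
    mul_le_mul_of_nonneg_left hblow (le_of_lt hazpos),
    mul_pos hazpos hbpos, sq_nonneg γ,
    mul_le_mul_of_nonneg_right (mul_le_mul_of_nonneg_left hblow (le_of_lt hazpos)) (sq_nonneg γ)]
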